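/- For the symbols X₀(x, ξ) = ξ₂ − x₁ξ₃, X₁(x, ξ) = ξ₁ − x₃ξ₃, X₂(x, ξ) = (1+x₁)ξ₃ on ℝ³, hypothesis (H2) holds: for every compact K ⊂ ℝ³ there exists C > 0 such that {X₁, X₀}(x,ξ)² ≤ C∑_{k=0}^{2} X_k(x,ξ)² and {X₂, X₀}(x,ξ)² ≤ C∑_{k=0}^{2} X_k(x,ξ)² for all (x, ξ) ∈ K × ℝ³. -/
import Mathlib


/-- Partial derivative of a real function on `ℝ³` in the `k`-th coordinate direction. -/
noncomputable def pd3 (h : (Fin 3 → ℝ) → ℝ) (k : Fin 3) (y : Fin 3 → ℝ) : ℝ :=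
  fderiv ℝ h y (Pi.single k 1)

/-- The Poisson bracket of two functions on `ℝ³ × ℝ³`. -/
noncomputable def poissonBracket3 (f g : (Fin 3 → ℝ) → (Fin 3 → ℝ) → ℝ)
    (x ξ : Fin 3 → ℝ) : ℝ :=
  ∑ k : Fin 3,
    (pd3 (f x) k ξ * pd3 (fun y => g y ξ) k x - pd3 (fun y => f y ξ) k x * pd3 (g x) k ξ)

lemma pd3_lin (a b c : ℝ) (i j k : Fin 3) (y : Fin 3 → ℝ) :
    pd3 (fun z => a * z i + b * z j + c) k y
      = a * (Pi.single k 1 : Fin 3 → ℝ) i + b * (Pi.single k 1 : Fin 3 → ℝ) j := by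
  have h1 : HasFDerivAt (fun z : Fin 3 → ℝ => a * z i + b * z j + c)
      (a • (ContinuousLinearMap.proj i : (Fin 3 → ℝ) →L[ℝ] ℝ)
        + b • (ContinuousLinearMap.proj j : (Fin 3 → ℝ) →L[ℝ] ℝ)) y := by
    have hi : HasFDerivAt (fun z : Fin 3 → ℝ => z i)
        (ContinuousLinearMap.proj i : (Fin 3 → ℝ) →L[ℝ] ℝ) y :=
      hasFDerivAt_apply i y
    have hj : HasFDerivAt (fun z : Fin 3 → ℝ => z j)
        (ContinuousLinearMap.proj j : (Fin 3 → ℝ) →L[ℝ] ℝ) y :=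
      hasFDerivAt_apply j y
    exact ((hi.const_mul a).add (hj.const_mul b)).add_const c
  simp [pd3, h1.fderiv]


lemma bracket1 (x ξ : Fin 3 → ℝ) :
    poissonBracket3 (fun x ξ => ξ 0 - x 2 * ξ 2) (fun x ξ => ξ 1 - x 0 * ξ 2) x ξ
      = -((1 + x 0) * ξ 2) := by
  have h1 : (fun z : Fin 3 → ℝ => z 0 - x 2 * z 2)
      = fun z => 1 * z 0 + (-(x 2)) * z 2 + 0 := by funext z; ring
  have h2 : (fun z : Fin 3 → ℝ => z 1 - x 0 * z 2)
      = fun z => 1 * z 1 + (-(x 0)) * z 2 + 0 := by funext z; ring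
  have h3 : (fun z : Fin 3 → ℝ => ξ 1 - z 0 * ξ 2)
      = fun z => (-(ξ 2)) * z 0 + 0 * z 0 + ξ 1 := by funext z; ring
  have h4 : (fun z : Fin 3 → ℝ => ξ 0 - z 2 * ξ 2)
      = fun z => (-(ξ 2)) * z 2 + 0 * z 2 + ξ 0 := by funext z; ring
  simp only [poissonBracket3, Fin.sum_univ_three, h1, h2, h3, h4, pd3_lin, Pi.single_apply]
  norm_num [Fin.ext_iff]
  ring

lemma bracket2 (x ξ : Fin 3 → ℝ) :
    poissonBracket3 (fun x ξ => (1 + x 0) * ξ 2) (fun x ξ => ξ 1 - x 0 * ξ 2) x ξ = 0 := by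
  have h1 : (fun z : Fin 3 → ℝ => (1 + x 0) * z 2)
      = fun z => (1 + x 0) * z 2 + 0 * z 2 + 0 := by funext z; ring
  have h2 : (fun z : Fin 3 → ℝ => z 1 - x 0 * z 2)
      = fun z => 1 * z 1 + (-(x 0)) * z 2 + 0 := by funext z; ring
  have h3 : (fun z : Fin 3 → ℝ => ξ 1 - z 0 * ξ 2)
      = fun z => (-(ξ 2)) * z 0 + 0 * z 0 + ξ 1 := by funext z; ring
  have h4 : (fun z : Fin 3 → ℝ => (1 + z 0) * ξ 2)
      = fun z => (ξ 2) * z 0 + 0 * z 0 + ξ 2 := by funext z; ring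
  simp only [poissonBracket3, Fin.sum_univ_three, h1, h2, h3, h4, pd3_lin, Pi.single_apply]
  norm_num [Fin.ext_iff]

/-- Example 2.4, hypothesis (H2): for every compact `K ⊂ ℝ³` there is `C > 0` with
`{X₁,X₀}² ≤ C ∑ₖ Xₖ²` and `{X₂,X₀}² ≤ C ∑ₖ Xₖ²` on `K × ℝ³`. -/
theorem example_H2_verification :
    let X0 : (Fin 3 → ℝ) → (Fin 3 → ℝ) → ℝ := fun x ξ => ξ 1 - x 0 * ξ 2
    let X1 : (Fin 3 → ℝ) → (Fin 3 → ℝ) → ℝ := fun x ξ => ξ 0 - x 2 * ξ 2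
    let X2 : (Fin 3 → ℝ) → (Fin 3 → ℝ) → ℝ := fun x ξ => (1 + x 0) * ξ 2
    ∀ K : Set (Fin 3 → ℝ), IsCompact K → ∃ C : ℝ, 0 < C ∧
      ∀ x ∈ K, ∀ ξ : Fin 3 → ℝ,
        (poissonBracket3 X1 X0 x ξ) ^ 2
            ≤ C * ((X0 x ξ) ^ 2 + (X1 x ξ) ^ 2 + (X2 x ξ) ^ 2) ∧
        (poissonBracket3 X2 X0 x ξ) ^ 2
            ≤ C * ((X0 x ξ) ^ 2 + (X1 x ξ) ^ 2 + (X2 x ξ) ^ 2) := by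
  intro X0 X1 X2 K hK
  refine ⟨1, one_pos, fun x hx ξ => ⟨?_, ?_⟩⟩
  · have e1 : poissonBracket3 X1 X0 x ξ = -((1 + x 0) * ξ 2) := bracket1 x ξ
    rw [e1]
    have := sq_nonneg (X0 x ξ)
    have := sq_nonneg (X1 x ξ)
    simp only [X0, X1, X2] at *
    nlinarith [sq_nonneg ((1 + x 0) * ξ 2)]
  · have e2 : poissonBracket3 X2 X0 x ξ = 0 := bracket2 x ξ
    rw [e2]
    norm_num
    positivity
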